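/- The discrete Potts functional attains its minimum: there exists u* : Ω → ℝ such that P_γ(u*) ≤ P_γ(u) for every u : Ω → ℝ. -/

import Mathlib

open Finset

/-- The discrete image domain `Ω = {0,…,M−1} × {0,…,N−1} ⊆ ℤ²`. -/
noncomputable def gridDomain (M N : ℕ) : Finset (ℤ × ℤ) :=
  (Finset.Ico (0 : ℤ) (M : ℤ)) ×ˢ (Finset.Ico (0 : ℤ) (N : ℤ))

/-- Pixels of the image domain. -/
abbrev Pix (M N : ℕ) := {p : ℤ × ℤ // p ∈ gridDomain M N}

/-- `‖∇_a u‖₀`: the number of pixels `p ∈ Ω` with `p + a ∈ Ω` and `u (p + a) ≠ u p`. -/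
noncomputable def jumpCount (M N : ℕ) (u : Pix M N → ℝ) (a : ℤ × ℤ) : ℕ :=
  Set.ncard {p : Pix M N |
    ∃ h : (p : ℤ × ℤ) + a ∈ gridDomain M N, u ⟨(p : ℤ × ℤ) + a, h⟩ ≠ u p}

/-- The "jump pattern" of a function `u`. -/
noncomputable def pat (M N S : ℕ) (a : Fin S → ℤ × ℤ) (u : Pix M N → ℝ) :
    Pix M N × Fin S → Bool :=
  fun q => @decide (∃ h : (q.1 : ℤ × ℤ) + a q.2 ∈ gridDomain M N,
      u ⟨(q.1 : ℤ × ℤ) + a q.2, h⟩ ≠ u q.1) (Classical.propDecidable _)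

/-- The subspace of functions whose jumps are contained in the pattern `J`. -/
def Vsub (M N S : ℕ) (a : Fin S → ℤ × ℤ) (J : Pix M N × Fin S → Bool) :
    Submodule ℝ (Pix M N → ℝ) where
  carrier := {v | ∀ (p : Pix M N) (s : Fin S) (h : (p : ℤ × ℤ) + a s ∈ gridDomain M N),
    J (p, s) = false → v ⟨(p : ℤ × ℤ) + a s, h⟩ = v p}
  add_mem' := by
    intro v w hv hw p s h hJ
    simp only [Pi.add_apply, hv p s h hJ, hw p s h hJ]
  zero_mem' := by intro p s h hJ; rfl
  smul_mem' := by
    intro c v hv p s h hJ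
    simp only [Pi.smul_apply, hv p s h hJ]

/-- Count of jump locations allowed by a pattern `J` in direction index `s`. -/
noncomputable def cnt (M N S : ℕ) (a : Fin S → ℤ × ℤ) (J : Pix M N × Fin S → Bool)
    (s : Fin S) : ℕ :=
  Set.ncard {p : Pix M N | ((p : ℤ × ℤ) + a s ∈ gridDomain M N) ∧ J (p, s) = true}

lemma mem_Vsub_pat (M N S : ℕ) (a : Fin S → ℤ × ℤ) (u : Pix M N → ℝ) :
    u ∈ Vsub M N S a (pat M N S a u) := by
  intro p s h hJ
  by_contra hne
  have : pat M N S a u (p, s) = true := by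
    unfold pat
    exact @decide_eq_true _ (Classical.propDecidable _) ⟨h, hne⟩
  rw [hJ] at this
  exact Bool.false_ne_true this

lemma jumpCount_eq_cnt_pat (M N S : ℕ) (a : Fin S → ℤ × ℤ) (u : Pix M N → ℝ) (s : Fin S) :
    jumpCount M N u (a s) = cnt M N S a (pat M N S a u) s := by
  unfold jumpCount cnt
  congr 1
  ext p
  simp only [Set.mem_setOf_eq]
  constructor
  · rintro ⟨h, hne⟩
    exact ⟨h, by unfold pat; exact @decide_eq_true _ (Classical.propDecidable _) ⟨h, hne⟩⟩
  · rintro ⟨h, hJ⟩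
    have := @of_decide_eq_true _ (Classical.propDecidable _) hJ
    obtain ⟨h', hne⟩ := this
    exact ⟨h, hne⟩

lemma jumpCount_le_cnt (M N S : ℕ) (a : Fin S → ℤ × ℤ) (J : Pix M N × Fin S → Bool)
    (u : Pix M N → ℝ) (hu : u ∈ Vsub M N S a J) (s : Fin S) :
    jumpCount M N u (a s) ≤ cnt M N S a J s := by
  unfold jumpCount cnt
  apply Set.ncard_le_ncard _ (Set.toFinite _)
  rintro p ⟨h, hne⟩
  refine ⟨h, ?_⟩
  by_contra hJ
  have hfalse : J (p, s) = false := by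
    cases hJe : J (p, s) with
    | false => rfl
    | true => exact absurd hJe hJ
  exact hne (hu p s h hfalse)

/-- Minimization of the quadratic part over a subspace. -/
lemma exists_min_quad {ι : Type*} [Fintype ι] {m : ℕ}
    (A : (ι → ℝ) →ₗ[ℝ] (Fin m → ℝ)) (f : Fin m → ℝ) (V : Submodule ℝ (ι → ℝ)) :
    ∃ v ∈ V, ∀ w ∈ V, (∑ i, (A v i - f i) ^ 2) ≤ ∑ i, (A w i - f i) ^ 2 := by
  classical
  let A' : (ι → ℝ) →ₗ[ℝ] EuclideanSpace ℝ (Fin m) :=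
    ((EuclideanSpace.equiv (Fin m) ℝ).symm.toLinearEquiv.toLinearMap).comp A
  let K : Submodule ℝ (EuclideanSpace ℝ (Fin m)) := V.map A'
  have hK : IsComplete (K : Set (EuclideanSpace ℝ (Fin m))) :=
    K.complete_of_finiteDimensional
  set f' : EuclideanSpace ℝ (Fin m) := (EuclideanSpace.equiv (Fin m) ℝ).symm f with hf'
  obtain ⟨v', hv'K, hmin⟩ := K.exists_norm_eq_iInf_of_complete_subspace hK f'
  obtain ⟨v, hvV, rfl⟩ := hv'K
  refine ⟨v, hvV, fun w hwV => ?_⟩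
  have hle : ‖f' - A' v‖ ≤ ‖f' - A' w‖ := by
    rw [hmin]
    exact ciInf_le ⟨0, by rintro x ⟨y, rfl⟩; exact norm_nonneg _⟩
      (⟨A' w, ⟨w, hwV, rfl⟩⟩ : (K : Set (EuclideanSpace ℝ (Fin m))))
  have key : ∀ z : ι → ℝ, (∑ i, (A z i - f i) ^ 2) = ‖f' - A' z‖ ^ 2 := by
    intro z
    rw [EuclideanSpace.norm_eq, Real.sq_sqrt (by positivity)]
    refine Finset.sum_congr rfl fun i _ => ?_
    have h1 : (f' - A' z) i = f i - A z i := rfl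
    rw [h1, Real.norm_eq_abs, sq_abs]
    ring
  rw [key v, key w]
  exact pow_le_pow_left₀ (norm_nonneg _) hle 2

/-- the discrete Potts functional
`P_γ(u) = ‖Au − f‖₂² + γ Σ_s ω_s ‖∇_{a_s} u‖₀` attains its minimum. -/
theorem potts_min_exists (M N m S : ℕ) (hM : 1 ≤ M) (hN : 1 ≤ N) (hS : 1 ≤ S)
    (a : Fin S → ℤ × ℤ) (ha : ∀ s, a s ≠ 0)
    (ω : Fin S → ℝ) (hω : ∀ s, 0 < ω s)
    (A : (Pix M N → ℝ) →ₗ[ℝ] (Fin m → ℝ)) (f : Fin m → ℝ)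
    (γ : ℝ) (hγ : 0 < γ) :
    ∃ ustar : Pix M N → ℝ, ∀ u : Pix M N → ℝ,
      ((∑ i, (A ustar i - f i) ^ 2) +
          γ * ∑ s, ω s * (jumpCount M N ustar (a s) : ℝ)) ≤
        (∑ i, (A u i - f i) ^ 2) +
          γ * ∑ s, ω s * (jumpCount M N u (a s) : ℝ) := by
  classical
  -- for each pattern J, choose a minimizer of the quadratic part on `Vsub J`
  have hchoice : ∀ J : Pix M N × Fin S → Bool,
      ∃ v ∈ Vsub M N S a J, ∀ w ∈ Vsub M N S a J,
        (∑ i, (A v i - f i) ^ 2) ≤ ∑ i, (A w i - f i) ^ 2 :=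
    fun J => exists_min_quad A f (Vsub M N S a J)
  choose uJ huJmem huJmin using hchoice
  -- the candidate value for each pattern
  set F : (Pix M N × Fin S → Bool) → ℝ := fun J =>
    (∑ i, (A (uJ J) i - f i) ^ 2) + γ * ∑ s, ω s * (cnt M N S a J s : ℝ) with hF
  obtain ⟨Jstar, _, hJstar⟩ :=
    Finset.exists_min_image Finset.univ F ⟨pat M N S a 0, Finset.mem_univ _⟩
  refine ⟨uJ Jstar, fun u => ?_⟩
  have step1 : ((∑ i, (A (uJ Jstar) i - f i) ^ 2) +
      γ * ∑ s, ω s * (jumpCount M N (uJ Jstar) (a s) : ℝ)) ≤ F Jstar := by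
    apply add_le_add_right
    apply mul_le_mul_of_nonneg_left _ hγ.le
    apply Finset.sum_le_sum
    intro s _
    apply mul_le_mul_of_nonneg_left _ (hω s).le
    exact_mod_cast jumpCount_le_cnt M N S a Jstar (uJ Jstar) (huJmem Jstar) s
  have step2 : F Jstar ≤ F (pat M N S a u) := hJstar _ (Finset.mem_univ _)
  have step3 : F (pat M N S a u) ≤
      (∑ i, (A u i - f i) ^ 2) + γ * ∑ s, ω s * (jumpCount M N u (a s) : ℝ) := by
    apply add_le_add
    · exact huJmin (pat M N S a u) u (mem_Vsub_pat M N S a u)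
    · apply le_of_eq
      congr 1
      refine Finset.sum_congr rfl fun s _ => ?_
      rw [jumpCount_eq_cnt_pat M N S a u s]
  linarith
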